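/- Let A = ⟨Q,Σ,F,Δ,E,C⟩ be a positive conjunctive TABG whose global constraint C is a conjunction of atoms q ≈ q', q ≉ q' and natural linear inequalities over the |q|. Then L(A_¬ℕ) = L(A). -/

import Mathlib

set_option maxHeartbeats 1000000

namespace TreeAut

/-! ### Ranked terms -/

/-- Ranked terms over a symbol type `F` (arities are imposed by well-formedness). -/
inductive RTerm (F : Type) : Type
  | node : F → List (RTerm F) → RTerm F

namespace RTerm

def rootLabel {F : Type} : RTerm F → F
  | .node f _ => f

/-- `SubAt t p s` : the subterm of `t` at position `p` is `s`. -/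
inductive SubAt {F : Type} : RTerm F → List ℕ → RTerm F → Prop
  | refl (t : RTerm F) : SubAt t [] t
  | step {f : F} {ts : List (RTerm F)} {i : ℕ} {u s : RTerm F} {p : List ℕ} :
      ts[i]? = some u → SubAt u p s → SubAt (RTerm.node f ts) (i :: p) s

/-- `p` is a position of `t`. -/
def IsPos {F : Type} (t : RTerm F) (p : List ℕ) : Prop := ∃ s, SubAt t p s

/-- `ReplAt t p s t'` : `t'` is the result of replacing in `t` the subterm at `p` by `s`. -/
inductive ReplAt {F : Type} : RTerm F → List ℕ → RTerm F → RTerm F → Prop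
  | here (t s : RTerm F) : ReplAt t [] s s
  | step {f : F} {ts : List (RTerm F)} {i : ℕ} {u u' s : RTerm F} {p : List ℕ} :
      ts[i]? = some u → ReplAt u p s u' →
      ReplAt (RTerm.node f ts) (i :: p) s (RTerm.node f (ts.set i u'))

/-- Height of a term: the maximal length of a position. -/
def height {F : Type} : RTerm F → ℕ
  | .node _ [] => 0
  | .node f (t :: ts) => max (height t + 1) (height (RTerm.node f ts))

/-- Well-formedness of a term with respect to an arity function. -/
inductive WF {F : Type} (ar : F → ℕ) : RTerm F → Prop
  | node {f : F} {ts : List (RTerm F)} :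
      ts.length = ar f → (∀ u ∈ ts, WF ar u) → WF ar (RTerm.node f ts)

/-- A constant, i.e. a term reduced to a symbol (of arity 0). -/
def IsConst {F : Type} (t : RTerm F) : Prop := ∃ c : F, t = RTerm.node c []

/-- Relabeling of a term. -/
def map {F G : Type} (g : F → G) : RTerm F → RTerm G
  | .node f ts => RTerm.node (g f) (ts.attach.map (fun u => map g u.1))
decreasing_by
  simp only [RTerm.node.sizeOf_spec]
  have := List.sizeOf_lt_of_mem u.2
  omega

end RTerm

/-! ### Patterns (terms with variables) and flat equational theories -/

/-- Terms with variables (variables are natural numbers). -/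
inductive Pat (F : Type) : Type
  | var : ℕ → Pat F
  | node : F → List (Pat F) → Pat F

namespace Pat

def subst {F : Type} (σ : ℕ → RTerm F) : Pat F → RTerm F
  | .var v => σ v
  | .node f ps => RTerm.node f (ps.attach.map (fun p => subst σ p.1))
decreasing_by
  simp only [Pat.node.sizeOf_spec]
  have := List.sizeOf_lt_of_mem p.2
  omega

def height {F : Type} : Pat F → ℕ
  | .var _ => 0
  | .node _ [] => 0
  | .node f (p :: ps) => max (height p + 1) (height (Pat.node f ps))

inductive HasVar {F : Type} (v : ℕ) : Pat F → Prop
  | var : HasVar v (Pat.var v)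
  | node {f : F} {ps : List (Pat F)} {p : Pat F} :
      p ∈ ps → HasVar v p → HasVar v (Pat.node f ps)

inductive WF {F : Type} (ar : F → ℕ) : Pat F → Prop
  | var (v : ℕ) : WF ar (Pat.var v)
  | node {f : F} {ps : List (Pat F)} :
      ps.length = ar f → (∀ p ∈ ps, WF ar p) → WF ar (Pat.node f ps)

end Pat

/-- A flat equation: both sides well-formed, of the same height which is at most 1,
and with the same variables. -/
def IsFlatEq {F : Type} (ar : F → ℕ) (e : Pat F × Pat F) : Prop :=
  e.1.WF ar ∧ e.2.WF ar ∧ e.1.height = e.2.height ∧ e.1.height ≤ 1 ∧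
  (∀ v : ℕ, Pat.HasVar v e.1 ↔ Pat.HasVar v e.2)

/-- One rewrite step using an equation of `E` (in either direction) at some position. -/
def Rew {F : Type} (E : List (Pat F × Pat F)) (s t : RTerm F) : Prop :=
  ∃ l r : Pat F, ((l, r) ∈ E ∨ (r, l) ∈ E) ∧
    ∃ (σ : ℕ → RTerm F) (p : List ℕ),
      RTerm.SubAt s p (l.subst σ) ∧ RTerm.ReplAt s p (r.subst σ) t

/-- Equivalence modulo the set of equations `E`. -/
def EqE {F : Type} (E : List (Pat F × Pat F)) : RTerm F → RTerm F → Prop :=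
  Relation.ReflTransGen (Rew E)

/-! ### Global constraints -/

/-- Transition rule of a tree automaton with constraints between brothers:
`sym(args) → res` with brother equalities `bcEq` and disequalities `bcNeq`
(1-based indices of children). -/
structure Rule (F Q : Type) where
  sym : F
  args : List Q
  bcEq : List (ℕ × ℕ)
  bcNeq : List (ℕ × ℕ)
  res : Q

/-- Atomic global constraints: `q ≈ q'`, `q ≉ q'`, and linear inequalities
`Σ c·|q| ≥ a` (type `|.|`) and `Σ c·‖q‖ ≥ a` (type `‖.‖`). -/
inductive GAtom (Q : Type) : Type
  | eq : Q → Q → GAtom Q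
  | neq : Q → Q → GAtom Q
  | cnt : List (ℤ × Q) → ℤ → GAtom Q
  | cls : List (ℤ × Q) → ℤ → GAtom Q

/-- Boolean combinations of atomic global constraints. -/
inductive GC (Q : Type) : Type
  | tt : GC Q
  | ff : GC Q
  | atom : GAtom Q → GC Q
  | and : GC Q → GC Q → GC Q
  | or : GC Q → GC Q → GC Q
  | not : GC Q → GC Q

/-- The set of `=E`-equivalence classes of members of a set of terms. -/
def classesOf {F : Type} (E : List (Pat F × Pat F)) (S : Set (RTerm F)) :
    Set (Set (RTerm F)) :=
  {C | ∃ t ∈ S, C = {u | EqE E t u}}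

section Sat

variable {β F Q : Type}

/-- Positions of a (run) tree where the node has state `q`
(`st` extracts the state of a node label). -/
def stPos (st : β → Q) (r : RTerm β) (q : Q) : Set (List ℕ) :=
  {p | ∃ s, RTerm.SubAt r p s ∧ st s.rootLabel = q}

/-- `⟦|q|⟧` : the number of positions with state `q`. -/
noncomputable def stCount (st : β → Q) (r : RTerm β) (q : Q) : ℕ :=
  (stPos st r q).ncard

/-- Terms occurring below positions with state `q`. -/
def stTerms (st : β → Q) (sy : β → F) (r : RTerm β) (q : Q) : Set (RTerm F) :=
  {t | ∃ p s, RTerm.SubAt r p s ∧ st s.rootLabel = q ∧ s.map sy = t}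

/-- `⟦‖q‖⟧` : the number of `=E`-classes of terms at positions with state `q`. -/
noncomputable def clsCount (E : List (Pat F × Pat F)) (st : β → Q) (sy : β → F)
    (r : RTerm β) (q : Q) : ℕ :=
  (classesOf E (stTerms st sy r q)).ncard

/-- Satisfaction of a global atomic constraint by a run tree. -/
def satAtom (E : List (Pat F × Pat F)) (st : β → Q) (sy : β → F) (r : RTerm β) :
    GAtom Q → Prop
  | .eq q q' => ∀ p p' s s', p ≠ p' → RTerm.SubAt r p s → RTerm.SubAt r p' s' →
      st s.rootLabel = q → st s'.rootLabel = q' → EqE E (s.map sy) (s'.map sy)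
  | .neq q q' => ∀ p p' s s', p ≠ p' → RTerm.SubAt r p s → RTerm.SubAt r p' s' →
      st s.rootLabel = q → st s'.rootLabel = q' → ¬ EqE E (s.map sy) (s'.map sy)
  | .cnt l a => a ≤ (l.map (fun cq => cq.1 * (stCount st r cq.2 : ℤ))).sum
  | .cls l a => a ≤ (l.map (fun cq => cq.1 * (clsCount E st sy r cq.2 : ℤ))).sum

/-- Satisfaction of a global constraint by a run tree. -/
def satGC (E : List (Pat F × Pat F)) (st : β → Q) (sy : β → F) (r : RTerm β) :
    GC Q → Prop
  | .tt => True
  | .ff => False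
  | .atom a => satAtom E st sy r a
  | .and c d => satGC E st sy r c ∧ satGC E st sy r d
  | .or c d => satGC E st sy r c ∨ satGC E st sy r d
  | .not c => ¬ satGC E st sy r c

end Sat

/-! ### Tree automata with global and brother constraints modulo a flat theory -/

/-- A run is represented as a tree labeled by the rules applied at each position. -/
abbrev Run (F Q : Type) := RTerm (Rule F Q)

def Run.state {F Q : Type} (r : Run F Q) : Q := (RTerm.rootLabel r).res
def Run.term {F Q : Type} (r : Run F Q) : RTerm F := r.map Rule.sym

/-- `r` is a structurally correct run using rules of `Δ`, whose local brother
constraints are satisfied modulo `E`. -/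
inductive IsRun {F Q : Type} (Δ : List (Rule F Q)) (E : List (Pat F × Pat F)) :
    Run F Q → Prop
  | node {ρ : Rule F Q} {rs : List (Run F Q)} :
      ρ ∈ Δ →
      ρ.args = rs.map Run.state →
      (∀ r ∈ rs, IsRun Δ E r) →
      (∀ i j ri rj, (i, j) ∈ ρ.bcEq → rs[i - 1]? = some ri →
        rs[j - 1]? = some rj → EqE E ri.term rj.term) →
      (∀ i j ri rj, (i, j) ∈ ρ.bcNeq → rs[i - 1]? = some ri →
        rs[j - 1]? = some rj → ¬ EqE E ri.term rj.term) →
      IsRun Δ E (RTerm.node ρ rs)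

/-- Tree automaton with brother constraints and global constraints modulo a flat theory. -/
structure TABG (F Q : Type) where
  arity : F → ℕ
  stQ : Finset Q
  rules : List (Rule F Q)
  final : List Q
  eqs : List (Pat F × Pat F)
  gc : GC Q

def TABG.IsAccRun {F Q : Type} (A : TABG F Q) (r : Run F Q) : Prop :=
  IsRun A.rules A.eqs r ∧ satGC A.eqs Rule.res Rule.sym r A.gc ∧ r.state ∈ A.final

def TABG.Lang {F Q : Type} (A : TABG F Q) : Set (RTerm F) :=
  {t | ∃ r : Run F Q, A.IsAccRun r ∧ r.term = t}

def Rule.WFr {F Q : Type} (ar : F → ℕ) (S : Finset Q) (ρ : Rule F Q) : Prop :=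
  ρ.args.length = ar ρ.sym ∧ ρ.res ∈ S ∧ (∀ q ∈ ρ.args, q ∈ S) ∧
  (∀ ij ∈ ρ.bcEq, 1 ≤ ij.1 ∧ ij.1 ≤ ρ.args.length ∧ 1 ≤ ij.2 ∧ ij.2 ≤ ρ.args.length) ∧
  (∀ ij ∈ ρ.bcNeq, 1 ≤ ij.1 ∧ ij.1 ≤ ρ.args.length ∧ 1 ≤ ij.2 ∧ ij.2 ≤ ρ.args.length)

/-- Well-formedness of a TABG: the equational theory is flat, the rules respect
the arities and the state set, and final states belong to the state set. -/
def TABG.WF {F Q : Type} (A : TABG F Q) : Prop :=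
  (∀ e ∈ A.eqs, IsFlatEq A.arity e) ∧
  (∀ ρ ∈ A.rules, ρ.WFr A.arity A.stQ) ∧
  (∀ q ∈ A.final, q ∈ A.stQ)

/-! ### Classes of constraints -/

def GAtom.IsEqNeq {Q : Type} : GAtom Q → Prop
  | .eq _ _ => True
  | .neq _ _ => True
  | .cnt _ _ => False
  | .cls _ _ => False

/-- All coefficients and the constant have the same sign. -/
def sameSign (l : List ℤ) (a : ℤ) : Prop :=
  ((∀ c ∈ l, 0 ≤ c) ∧ 0 ≤ a) ∨ ((∀ c ∈ l, c ≤ 0) ∧ a ≤ 0)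

/-- eq/neq atoms and *natural* linear inequalities. -/
def GAtom.IsNat {Q : Type} : GAtom Q → Prop
  | .eq _ _ => True
  | .neq _ _ => True
  | .cnt l a => sameSign (l.map Prod.fst) a
  | .cls l a => sameSign (l.map Prod.fst) a

/-- eq/neq atoms and natural linear inequalities over the `|q|` only. -/
def GAtom.IsNatCnt {Q : Type} : GAtom Q → Prop
  | .eq _ _ => True
  | .neq _ _ => True
  | .cnt l a => sameSign (l.map Prod.fst) a
  | .cls _ _ => False

def GC.AtomsAre {Q : Type} (P : GAtom Q → Prop) : GC Q → Prop
  | .tt => True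
  | .ff => True
  | .atom a => P a
  | .and c d => GC.AtomsAre P c ∧ GC.AtomsAre P d
  | .or c d => GC.AtomsAre P c ∧ GC.AtomsAre P d
  | .not c => GC.AtomsAre P c

/-- Positive conjunctive constraint: a conjunction of atoms. -/
def GC.IsConjAtoms {Q : Type} : GC Q → Prop
  | .tt => True
  | .ff => False
  | .atom _ => True
  | .and c d => GC.IsConjAtoms c ∧ GC.IsConjAtoms d
  | .or _ _ => False
  | .not _ => False

/-- A literal: an atom (with natural arithmetic atoms) or the negation of an
eq/neq atom. -/
def GC.IsLit {Q : Type} : GC Q → Prop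
  | .atom a => GAtom.IsNat a
  | .not (.atom (.eq _ _)) => True
  | .not (.atom (.neq _ _)) => True
  | _ => False

def GC.IsConjLit {Q : Type} : GC Q → Prop
  | .and c d => GC.IsConjLit c ∧ GC.IsConjLit d
  | c => GC.IsLit c

def GC.IsDNF {Q : Type} : GC Q → Prop
  | .or c d => GC.IsDNF c ∧ GC.IsDNF d
  | c => GC.IsConjLit c

/-- Normalized constraint: `true`, `false`, or a disjunction of conjunctions of
literals in which all arithmetic literals are positive. -/
def GC.Normalized {Q : Type} (c : GC Q) : Prop :=
  c = GC.tt ∨ c = GC.ff ∨ GC.IsDNF c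

/-- No reflexive disequality constraints (the TAGED restriction). -/
def GC.NoReflNeq {Q : Type} : GC Q → Prop :=
  GC.AtomsAre (fun a => match a with
    | .neq q q' => q ≠ q'
    | _ => True)

def conjList {Q : Type} : List (GC Q) → GC Q
  | [] => GC.tt
  | [c] => c
  | c :: cs => GC.and c (conjList cs)

def disjList {Q : Type} : List (GC Q) → GC Q
  | [] => GC.ff
  | [c] => c
  | c :: cs => GC.or c (disjList cs)

/-- No local constraints between brothers. -/
def TABG.NoBrother {F Q : Type} (A : TABG F Q) : Prop :=
  ∀ ρ ∈ A.rules, ρ.bcEq = [] ∧ ρ.bcNeq = []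

/-- A TAG: empty equational theory and no brother constraints. -/
def TABG.IsTAG {F Q : Type} (A : TABG F Q) : Prop := A.eqs = [] ∧ A.NoBrother

/-- A plain tree automaton: a TAG with trivial global constraint. -/
def TABG.IsTA {F Q : Type} (A : TABG F Q) : Prop := A.IsTAG ∧ A.gc = GC.tt

/-! ### Synonym states -/

section Syn

variable {F Q : Type} [DecidableEq Q]

/-- Possible replacements of a state occurrence: `q̄` may stay or become `q̂`. -/
def replS (qb qh q : Q) : List Q := if q = qb then [qb, qh] else [q]

/-- Replacement of every occurrence of `|q̄|` (resp. `‖q̄‖`) by `|q̄| + |q̂|`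
(resp. `‖q̄‖ + ‖q̂‖`) in a linear expression. -/
def linRepl (qb qh : Q) (l : List (ℤ × Q)) : List (ℤ × Q) :=
  l.flatMap (fun cq => (replS qb qh cq.2).map (fun q' => (cq.1, q')))

/-- Literal transformation on positive atoms. -/
def synAtom (qb qh : Q) : GAtom Q → GC Q
  | .eq q1 q2 => conjList ((replS qb qh q1).flatMap (fun a =>
      (replS qb qh q2).map (fun b => GC.atom (GAtom.eq a b))))
  | .neq q1 q2 => conjList ((replS qb qh q1).flatMap (fun a =>
      (replS qb qh q2).map (fun b => GC.atom (GAtom.neq a b))))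
  | .cnt l a => GC.atom (GAtom.cnt (linRepl qb qh l) a)
  | .cls l a => GC.atom (GAtom.cls (linRepl qb qh l) a)

/-- The literal transformation `Ĉ` of (a normalized) constraint, for `q̄ ↝ q̂`. -/
def GC.synTrans (qb qh : Q) : GC Q → GC Q
  | .tt => .tt
  | .ff => .ff
  | .atom a => synAtom qb qh a
  | .not (.atom (.eq q1 q2)) => disjList ((replS qb qh q1).flatMap (fun a =>
      (replS qb qh q2).map (fun b => GC.not (GC.atom (GAtom.eq a b)))))
  | .not (.atom (.neq q1 q2)) => disjList ((replS qb qh q1).flatMap (fun a =>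
      (replS qb qh q2).map (fun b => GC.not (GC.atom (GAtom.neq a b)))))
  | .not c => GC.not (GC.synTrans qb qh c)
  | .and c d => GC.and (GC.synTrans qb qh c) (GC.synTrans qb qh d)
  | .or c d => GC.or (GC.synTrans qb qh c) (GC.synTrans qb qh d)

/-- All rules obtained from `ρ` by all possible replacements of occurrences of
`q̄` by `q̂`. -/
def Rule.synVars (qb qh : Q) (ρ : Rule F Q) : List (Rule F Q) :=
  (ρ.args.mapM (replS qb qh)).flatMap (fun args' =>
    (replS qb qh ρ.res).map (fun res' =>
      { sym := ρ.sym, args := args', bcEq := ρ.bcEq, bcNeq := ρ.bcNeq, res := res' }))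

/-- `F_{q̄↝q̂}` on the list of final states. -/
def finSyn (qb qh : Q) (l : List Q) : List Q := if qb ∈ l then qh :: l else l

/-- The constraint `‖q‖ = k`. -/
def clsEqC (q : Q) (k : ℤ) : GC Q :=
  GC.and (GC.atom (GAtom.cls [(1, q)] k)) (GC.atom (GAtom.cls [(-1, q)] (-k)))

/-- The automaton `A_{q̄↝q̂}`. -/
def TABG.synonym (A : TABG F Q) (qb qh : Q) : TABG F Q :=
  { arity := A.arity
    stQ := insert qh A.stQ
    rules := A.rules.flatMap (Rule.synVars qb qh)
    final := finSyn qb qh A.final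
    eqs := A.eqs
    gc := GC.and
      (GC.or (GC.and (clsEqC qb 0) (clsEqC qh 0))
             (GC.and (clsEqC qh 1) (GC.atom (GAtom.neq qb qh))))
      (GC.synTrans qb qh A.gc) }

end Syn

/-! ### Removal of the counting constraints `|q|` : the automaton `A_¬ℕ` -/

def GC.cntAtoms {Q : Type} : GC Q → List (List (ℤ × Q) × ℤ)
  | .atom (.cnt l a) => [(l, a)]
  | .and c d => GC.cntAtoms c ++ GC.cntAtoms d
  | .or c d => GC.cntAtoms c ++ GC.cntAtoms d
  | .not c => GC.cntAtoms c
  | _ => []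

def GC.eqAtoms {Q : Type} : GC Q → List (Q × Q)
  | .atom (.eq q q') => [(q, q')]
  | .and c d => GC.eqAtoms c ++ GC.eqAtoms d
  | .or c d => GC.eqAtoms c ++ GC.eqAtoms d
  | .not c => GC.eqAtoms c
  | _ => []

def GC.neqAtoms {Q : Type} : GC Q → List (Q × Q)
  | .atom (.neq q q') => [(q, q')]
  | .and c d => GC.neqAtoms c ++ GC.neqAtoms d
  | .or c d => GC.neqAtoms c ++ GC.neqAtoms d
  | .not c => GC.neqAtoms c
  | _ => []

/-- `max_A` : one plus the maximal constant occurring in the counting literals. -/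
def GC.maxConst {Q : Type} (c : GC Q) : ℕ :=
  1 + ((c.cntAtoms.map (fun la => la.2.natAbs)).foldr max 0)

/-- Truncated sum of two mappings `Q → {0,…,m}`. -/
def msumF {Q : Type} {m : ℕ} (M1 M2 : Q → Fin (m + 1)) : Q → Fin (m + 1) :=
  fun q => ⟨min ((M1 q : ℕ) + (M2 q : ℕ)) m, Nat.lt_succ_of_le (Nat.min_le_right _ _)⟩

/-- The mapping `M_q`. -/
def unitMap {Q : Type} [DecidableEq Q] (m : ℕ) (q : Q) : Q → Fin (m + 1) :=
  fun q' => if q' = q then ⟨min 1 m, Nat.lt_succ_of_le (Nat.min_le_right _ _)⟩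
            else ⟨0, Nat.succ_pos m⟩

/-- Value of a linear expression under a mapping. -/
def lvalF {Q : Type} {m : ℕ} (M : Q → Fin (m + 1)) (l : List (ℤ × Q)) : ℤ :=
  (l.map (fun cq => cq.1 * ((M cq.2 : ℕ) : ℤ))).sum

/-- All variants of a rule, decorated with occurrence-counting mappings. -/
noncomputable def Rule.notNVars {F Q : Type} [Fintype Q] [DecidableEq Q] (m : ℕ) (ρ : Rule F Q) :
    List (Rule F (Q × (Q → Fin (m + 1)))) :=
  ((ρ.args.mapM (fun q =>
      ((Finset.univ : Finset (Q → Fin (m + 1))).toList).map (fun M => (q, M))))).map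
    (fun args' =>
      { sym := ρ.sym, args := args', bcEq := ρ.bcEq, bcNeq := ρ.bcNeq,
        res := (ρ.res, (args'.map Prod.snd).foldr msumF (unitMap m ρ.res)) })

/-- The automaton `A_¬ℕ`. -/
noncomputable def TABG.notN {F Q : Type} [Fintype Q] [DecidableEq Q] (A : TABG F Q) :
    TABG F (Q × (Q → Fin (A.gc.maxConst + 1))) :=
  { arity := A.arity
    stQ := A.stQ ×ˢ (Finset.univ : Finset (Q → Fin (A.gc.maxConst + 1)))
    rules := A.rules.flatMap (Rule.notNVars A.gc.maxConst)
    final := (A.final.flatMap (fun q =>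
        ((Finset.univ : Finset (Q → Fin (A.gc.maxConst + 1))).toList).map
          (fun M => (q, M)))).filter
        (fun qM => decide (∀ la ∈ A.gc.cntAtoms, la.2 ≤ lvalF qM.2 la.1))
    eqs := A.eqs
    gc := GC.and
      (conjList ((A.gc.eqAtoms).flatMap (fun qq =>
        ((Finset.univ : Finset (Q → Fin (A.gc.maxConst + 1))).toList).flatMap (fun M1 =>
          ((Finset.univ : Finset (Q → Fin (A.gc.maxConst + 1))).toList).map (fun M2 =>
            GC.atom (GAtom.eq (qq.1, M1) (qq.2, M2)))))))
      (conjList ((A.gc.neqAtoms).flatMap (fun qq =>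
        ((Finset.univ : Finset (Q → Fin (A.gc.maxConst + 1))).toList).flatMap (fun M1 =>
          ((Finset.univ : Finset (Q → Fin (A.gc.maxConst + 1))).toList).map (fun M2 =>
            GC.atom (GAtom.neq (qq.1, M1) (qq.2, M2))))))) }

/-! ### Global pumpings -/

section Pump

variable {F Q : Type}

/-- `H_i` : positions of subruns of positive height equal to `i`. -/
def Hset (r : Run F Q) (i : ℕ) : Set (List ℕ) :=
  {p | ∃ s, RTerm.SubAt r p s ∧ 0 < RTerm.height s ∧ RTerm.height s = i}

/-- `Ȟ_i` : positions `p.j` of subruns of positive height `< i` whose parent has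
height `> i`. -/
def Hcheck (r : Run F Q) (i : ℕ) : Set (List ℕ) :=
  {p' | ∃ (p : List ℕ) (j : ℕ) (s s' : Run F Q), p' = p ++ [j] ∧
    RTerm.SubAt r p s ∧ RTerm.SubAt r p' s' ∧
    0 < RTerm.height s' ∧ RTerm.height s' < i ∧ i < RTerm.height s}

/-- `H̊_i` : positions `p.j` of subruns of height `0` (with `0 < i`) whose parent
has height `> i`. -/
def Hring (r : Run F Q) (i : ℕ) : Set (List ℕ) :=
  {p' | ∃ (p : List ℕ) (j : ℕ) (s s' : Run F Q), p' = p ++ [j] ∧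
    RTerm.SubAt r p s ∧ RTerm.SubAt r p' s' ∧
    RTerm.height s' = 0 ∧ 0 < i ∧ i < RTerm.height s}

def Dom (r : Run F Q) (i : ℕ) : Set (List ℕ) := Hset r i ∪ Hcheck r i ∪ Hring r i

/-- A pump-injection `I : (H_i ∪ Ȟ_i ∪ H̊_i) → (H_j ∪ Ȟ_j ∪ H̊_j)`. -/
structure PumpInj (E : List (Pat F × Pat F)) (r : Run F Q) (i j : ℕ)
    (I : List ℕ → List ℕ) : Prop where
  inj : Set.InjOn I (Dom r i)
  mapsH : Set.MapsTo I (Hset r i) (Hset r j)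
  mapsHc : Set.MapsTo I (Hcheck r i) (Hcheck r j)
  mapsHr : Set.MapsTo I (Hring r i) (Hring r j)
  idRing : ∀ p ∈ Hring r i, I p = p
  stPres : ∀ p ∈ Dom r i, ∀ s s', RTerm.SubAt r p s → RTerm.SubAt r (I p) s' →
    Run.state s = Run.state s'
  eqPres : ∀ p1 p2, p1 ∈ Dom r i → p2 ∈ Dom r i →
    ∀ s1 s2 s1' s2', RTerm.SubAt r p1 s1 → RTerm.SubAt r p2 s2 →
      RTerm.SubAt r (I p1) s1' → RTerm.SubAt r (I p2) s2' →
      (EqE E (Run.term s1) (Run.term s2) ↔ EqE E (Run.term s1') (Run.term s2'))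

/-- Simultaneous replacement at all positions of `D` (which are assumed to be
pairwise parallel): at a position of `D` the subtree is replaced by a tree
allowed by `ρ`, elsewhere the tree is kept. -/
inductive MultiRepl {β : Type} (D : Set (List ℕ)) (ρ : List ℕ → RTerm β → Prop) :
    List ℕ → RTerm β → RTerm β → Prop
  | here {p : List ℕ} {t t' : RTerm β} : p ∈ D → ρ p t' → MultiRepl D ρ p t t'
  | node {p : List ℕ} {f : β} {ts ts' : List (RTerm β)} :
      p ∉ D → ts.length = ts'.length →
      (∀ k u u', ts[k]? = some u → ts'[k]? = some u' →
        MultiRepl D ρ (p ++ [k]) u u') →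
      MultiRepl D ρ p (RTerm.node f ts) (RTerm.node f ts')

/-- `r'` is the global pumping on `r` with indexes `i,j` and injection `I`. -/
def IsGlobalPumpingWith (E : List (Pat F × Pat F)) (r : Run F Q) (i j : ℕ)
    (I : List ℕ → List ℕ) (r' : Run F Q) : Prop :=
  PumpInj E r i j I ∧
  MultiRepl (Dom r i) (fun p s => RTerm.SubAt r (I p) s) [] r r'

/-- The `=E`-classes of the subterms at positions of `P`. -/
def classesAt (E : List (Pat F × Pat F)) (r : Run F Q) (P : Set (List ℕ)) :
    Set (Set (RTerm F)) :=
  classesOf E {t | ∃ p ∈ P, ∃ s, RTerm.SubAt r p s ∧ Run.term s = t}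

/-- The tuple `r_{t,P}` of a class `C`, as a function on states. -/
noncomputable def tupleAt (r : Run F Q) (P : Set (List ℕ)) (C : Set (RTerm F))
    (q : Q) : ℕ :=
  {p | p ∈ P ∧ ∃ s, RTerm.SubAt r p s ∧ Run.state s = q ∧ Run.term s ∈ C}.ncard

/-- The multiset ordering `r_P ≤ r_{P'}` : an injection on classes which is
dominating on the associated tuples. -/
def MsetLE (E : List (Pat F × Pat F)) (r : Run F Q) (P P' : Set (List ℕ)) : Prop :=
  ∃ φ : Set (RTerm F) → Set (RTerm F),
    Set.InjOn φ (classesAt E r P) ∧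
    Set.MapsTo φ (classesAt E r P) (classesAt E r P') ∧
    ∀ C ∈ classesAt E r P, ∀ q, tupleAt r P C q ≤ tupleAt r P' (φ C) q

end Pump

/-! ### Multisets of tuples of naturals (for the well quasi-ordering) -/

def TupLE {n : ℕ} (x y : Fin n → ℕ) : Prop := ∀ k, x k ≤ y k

/-- Multiset ordering: an injection mapping each element to a dominating one. -/
def MLE {n : ℕ} (S T : Multiset (Fin n → ℕ)) : Prop :=
  ∃ T' : Multiset (Fin n → ℕ), T' ≤ T ∧ Multiset.Rel TupLE S T'

def msumT {n : ℕ} (S : Multiset (Fin n → ℕ)) : ℕ :=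
  (S.map (fun x => ∑ k, x k)).sum

/-! ### Hedge automata with global constraints, and currying -/

/-- A finite word automaton over the alphabet `Q` (auxiliary states are naturals). -/
structure WordAut (Q : Type) where
  stS : Finset ℕ
  init : ℕ
  final : List ℕ
  trans : List (ℕ × Q × ℕ)

inductive WAccepts {Q : Type} (W : WordAut Q) : ℕ → List Q → Prop
  | nil {s : ℕ} : s ∈ W.final → WAccepts W s []
  | cons {s : ℕ} {q : Q} {s' : ℕ} {w : List Q} :
      (s, q, s') ∈ W.trans → WAccepts W s' w → WAccepts W s (q :: w)

def WordAut.Lang {Q : Type} (W : WordAut Q) (w : List Q) : Prop := WAccepts W W.init w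

/-- Transition rule `a(L) → q` of a hedge automaton. -/
structure HRule (F Q : Type) where
  sym : F
  wa : WordAut Q
  res : Q

/-- Hedge automaton with global constraints, over unranked ordered terms. -/
structure HAG (F Q : Type) where
  stQ : Finset Q
  rules : List (HRule F Q)
  final : List Q
  gc : GC Q

abbrev HRun (F Q : Type) := RTerm (HRule F Q)

def HRun.state {F Q : Type} (r : HRun F Q) : Q := (RTerm.rootLabel r).res
def HRun.term {F Q : Type} (r : HRun F Q) : RTerm F := r.map HRule.sym

inductive IsHRun {F Q : Type} (Δ : List (HRule F Q)) : HRun F Q → Prop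
  | node {ρ : HRule F Q} {rs : List (HRun F Q)} :
      ρ ∈ Δ → ρ.wa.Lang (rs.map HRun.state) →
      (∀ r ∈ rs, IsHRun Δ r) → IsHRun Δ (RTerm.node ρ rs)

def HAG.Lang {F Q : Type} (A : HAG F Q) : Set (RTerm F) :=
  {t | ∃ r : HRun F Q, IsHRun A.rules r ∧
        satGC ([] : List (Pat F × Pat F)) HRule.res HRule.sym r A.gc ∧
        HRun.state r ∈ A.final ∧ HRun.term r = t}

/-- The ranked signature `Σ_@` : symbols of `Σ` become constants, `none` is the
binary symbol `@`. -/
def arAt {F : Type} : Option F → ℕ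
  | none => 2
  | some _ => 0

/-- The `curry` encoding of unranked terms into ranked terms over `Σ_@`. -/
inductive Curried {F : Type} : RTerm F → RTerm (Option F) → Prop
  | base {a : F} : Curried (RTerm.node a []) (RTerm.node (some a) [])
  | step {a : F} {ts : List (RTerm F)} {t : RTerm F} {u v : RTerm (Option F)} :
      Curried (RTerm.node a ts) u → Curried t v →
      Curried (RTerm.node a (ts ++ [t])) (RTerm.node none [u, v])

/-! ### Concrete signatures and languages -/

/-- The signature `{a:0, s:1, f:2}` (resp. `{a:0, g:1, f:2}`): symbol `0` has
arity 0, symbol `1` arity 1, symbol `2` arity 2. -/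
def ar3 : Fin 3 → ℕ := ![0, 1, 2]

/-- `iter1 n` is `s^n(a)` (resp. `g^n(a)`). -/
def iter1 : ℕ → RTerm (Fin 3)
  | 0 => RTerm.node 0 []
  | n + 1 => RTerm.node 1 [iter1 n]

/-- `chain [n1,…,nk] = f(s^{n1}(a), f(s^{n2}(a), …, f(s^{nk}(a), a)…))`. -/
def chain : List ℕ → RTerm (Fin 3)
  | [] => RTerm.node 0 []
  | n :: ns => RTerm.node 2 [iter1 n, chain ns]

/-- The language of chains with pairwise distinct exponents. -/
def LKey : Set (RTerm (Fin 3)) := {t | ∃ ns : List ℕ, ns.Nodup ∧ t = chain ns}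

/-- `bracket [n1,…,nk] = f(g^{n1}(a), f(…, f(g^{n_{k−1}}(a), g^{n_k}(a))…))`. -/
def bracket : List ℕ → RTerm (Fin 3)
  | [] => RTerm.node 0 []
  | [n] => iter1 n
  | n :: ns => RTerm.node 2 [iter1 n, bracket ns]

/-- Every entry has exactly one partner with the same value. -/
def ExactlyOnePartner (ns : List ℕ) : Prop :=
  ∀ i, i < ns.length → ∃! j, j < ns.length ∧ j ≠ i ∧ ns[i]? = ns[j]?

def LDup : Set (RTerm (Fin 3)) :=
  {t | ∃ ns : List ℕ, ns ≠ [] ∧ ExactlyOnePartner ns ∧ t = bracket ns}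

/-! ### Concrete, codable presentations of automata -/

abbrev RuleData := ℕ × List ℕ × List (ℕ × ℕ) × List (ℕ × ℕ) × ℕ
abbrev PatAtomData := ℕ ⊕ ℕ
abbrev FlatSideData := PatAtomData ⊕ (ℕ × List PatAtomData)
abbrev LinData := List (ℤ × ℕ) × ℤ
abbrev GAtomData := (ℕ × ℕ) ⊕ ((ℕ × ℕ) ⊕ (LinData ⊕ LinData))
abbrev GCNodeData := GAtomData ⊕ (ℕ × ℕ × ℕ)
abbrev TABGData :=
  List (ℕ × ℕ) × List RuleData × List ℕ × List (FlatSideData × FlatSideData) ×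
    List GCNodeData

def decodePatAtom : PatAtomData → Pat ℕ
  | Sum.inl v => Pat.var v
  | Sum.inr c => Pat.node c []

def decodeSide : FlatSideData → Pat ℕ
  | Sum.inl a => decodePatAtom a
  | Sum.inr (f, l) => Pat.node f (l.map decodePatAtom)

def decodeGAtom : GAtomData → GAtom ℕ
  | Sum.inl (q, q') => GAtom.eq q q'
  | Sum.inr (Sum.inl (q, q')) => GAtom.neq q q'
  | Sum.inr (Sum.inr (Sum.inl (l, a))) => GAtom.cnt l a
  | Sum.inr (Sum.inr (Sum.inr (l, a))) => GAtom.cls l a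

def decodeGC (nodes : List GCNodeData) : ℕ → ℕ → GC ℕ
  | 0, _ => GC.tt
  | fuel + 1, i =>
    match nodes[i]? with
    | some (Sum.inl a) => GC.atom (decodeGAtom a)
    | some (Sum.inr (op, l, rr)) =>
      if op = 0 then GC.tt
      else if op = 1 then GC.ff
      else if op = 2 then GC.and (decodeGC nodes fuel l) (decodeGC nodes fuel rr)
      else if op = 3 then GC.or (decodeGC nodes fuel l) (decodeGC nodes fuel rr)
      else GC.not (decodeGC nodes fuel l)
    | none => GC.tt

def decodeRule : RuleData → Rule ℕ ℕ
  | (f, args, be, bn, q) => ⟨f, args, be, bn, q⟩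

def decodeArity (sig : List (ℕ × ℕ)) : ℕ → ℕ :=
  fun f => (((sig.find? (fun p => p.1 == f)).map Prod.snd).getD 0)

def dataStates (rules : List RuleData) (final : List ℕ) : Finset ℕ :=
  (rules.flatMap (fun r => r.2.2.2.2 :: r.2.1)).toFinset ∪ final.toFinset

/-- Decoding of a full TABG with arbitrary Boolean global constraint. -/
def decodeTABG (d : TABGData) : TABG ℕ ℕ :=
  { arity := decodeArity d.1
    stQ := dataStates d.2.1 d.2.2.1
    rules := d.2.1.map decodeRule
    final := d.2.2.1
    eqs := d.2.2.2.1.map (fun e => (decodeSide e.1, decodeSide e.2))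
    gc := decodeGC d.2.2.2.2 (d.2.2.2.2).length 0 }

/-- Data for a `TAG^∧[≈]` : signature, rules (no brother constraints), final
states, and a conjunction of equational atoms `q ≈ q'`. -/
abbrev TAGCEData := List (ℕ × ℕ) × List (ℕ × List ℕ × ℕ) × List ℕ × List (ℕ × ℕ)

def decodeTAGCE (d : TAGCEData) : TABG ℕ ℕ :=
  { arity := decodeArity d.1
    stQ := (d.2.1.flatMap (fun r => r.2.2 :: r.2.1)).toFinset ∪ d.2.2.1.toFinset
    rules := d.2.1.map (fun r => ⟨r.1, r.2.1, [], [], r.2.2⟩)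
    final := d.2.2.1
    eqs := []
    gc := conjList (d.2.2.2.map (fun qq => GC.atom (GAtom.eq qq.1 qq.2))) }

/-- Data for a `TAG^∧[≈, |.|_ℤ]` : as above plus a conjunction of integer linear
inequalities. -/
abbrev TAGCZData :=
  List (ℕ × ℕ) × List (ℕ × List ℕ × ℕ) × List ℕ × List (ℕ × ℕ) × List LinData

def decodeTAGCZ (d : TAGCZData) : TABG ℕ ℕ :=
  { arity := decodeArity d.1
    stQ := (d.2.1.flatMap (fun r => r.2.2 :: r.2.1)).toFinset ∪ d.2.2.1.toFinset
    rules := d.2.1.map (fun r => ⟨r.1, r.2.1, [], [], r.2.2⟩)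
    final := d.2.2.1
    eqs := []
    gc := conjList
      (d.2.2.2.1.map (fun qq => GC.atom (GAtom.eq qq.1 qq.2)) ++
       d.2.2.2.2.map (fun la => GC.atom (GAtom.cnt la.1 la.2))) }

/-- A tree language over the ranked signature `ar` is regular if it is the
language of a plain tree automaton. -/
def IsRegular (ar : ℕ → ℕ) (L : Set (RTerm ℕ)) : Prop :=
  ∃ (n : ℕ) (B : TABG ℕ (Fin n)), B.arity = ar ∧ B.WF ∧ B.IsTA ∧ B.Lang = L

/-! ### Automata classes as predicates -/

/-- A TAGED: a TAG whose constraint is a conjunction of atoms `q ≈ q'`, `q ≉ q'`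
without reflexive disequalities. -/
def TAGEDCond {F Q : Type} (A : TABG F Q) : Prop :=
  A.IsTAG ∧ A.gc.IsConjAtoms ∧ A.gc.AtomsAre GAtom.IsEqNeq ∧ A.gc.NoReflNeq

/-- A positive conjunctive TAG with eq/neq atoms (`TAG^∧[≈,≉]`). -/
def TAGCwCond {F Q : Type} (A : TABG F Q) : Prop :=
  A.IsTAG ∧ A.gc.IsConjAtoms ∧ A.gc.AtomsAre GAtom.IsEqNeq

end TreeAut


namespace TreeAut

variable {F Q β γ : Type}

theorem RTerm.ind' {P : RTerm β → Prop}
    (h : ∀ f ts, (∀ u ∈ ts, P u) → P (RTerm.node f ts)) : ∀ t, P t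
  | .node f ts => h f ts (fun u hu => RTerm.ind' h u)
decreasing_by
  simp only [RTerm.node.sizeOf_spec]
  have := List.sizeOf_lt_of_mem hu
  omega

theorem RTerm.map_node (g : β → γ) (f : β) (ts : List (RTerm β)) :
    (RTerm.node f ts).map g = RTerm.node (g f) (ts.map (RTerm.map g)) := by
  rw [RTerm.map]
  simp [List.attach_map_subtype_val]

theorem RTerm.rootLabel_map (g : β → γ) (t : RTerm β) :
    (t.map g).rootLabel = g t.rootLabel := by
  cases t with
  | node f ts => rw [RTerm.map_node]; rfl

theorem RTerm.map_map (g : β → γ) {δ : Type} (h : γ → δ) (t : RTerm β) :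
    (t.map g).map h = t.map (h ∘ g) := by
  induction t using RTerm.ind' with
  | h f ts ih =>
    rw [RTerm.map_node, RTerm.map_node, RTerm.map_node, List.map_map]
    exact congrArg _ (List.map_congr_left (fun u hu => ih u hu))

theorem RTerm.SubAt.map {g : β → γ} {t s : RTerm β} {p : List ℕ}
    (h : RTerm.SubAt t p s) : RTerm.SubAt (t.map g) p (s.map g) := by
  induction h with
  | refl t => exact RTerm.SubAt.refl _
  | step hget hsub ih =>
    rw [RTerm.map_node]
    exact RTerm.SubAt.step (by rw [List.getElem?_map, hget]; rfl) ih

theorem RTerm.subAt_nil_eq {t s : RTerm β} (h : RTerm.SubAt t [] s) : s = t := by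
  cases h; rfl

theorem RTerm.subAt_map_inv {g : β → γ} {t : RTerm β} {s' : RTerm γ} {p : List ℕ}
    (h : RTerm.SubAt (t.map g) p s') : ∃ s, RTerm.SubAt t p s ∧ s' = s.map g := by
  induction p generalizing t s' with
  | nil => rw [RTerm.subAt_nil_eq h]; exact ⟨t, RTerm.SubAt.refl t, rfl⟩
  | cons i p ih =>
    cases t with
    | node f ts =>
      rw [RTerm.map_node] at h
      cases h with
      | step hget hsub =>
        rw [List.getElem?_map] at hget
        rcases Option.map_eq_some_iff.1 hget with ⟨u, hu, rfl⟩
        rcases ih hsub with ⟨s, hs, rfl⟩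
        exact ⟨s, RTerm.SubAt.step hu hs, rfl⟩

theorem RTerm.subAt_unique {t s s' : RTerm β} {p : List ℕ}
    (h : RTerm.SubAt t p s) (h' : RTerm.SubAt t p s') : s = s' := by
  induction h generalizing s' with
  | refl t => cases h'; rfl
  | step hget hsub ih =>
    cases h' with
    | step hget' hsub' =>
      rename_i u _ _ _ u' _
      rw [hget] at hget'
      cases hget'
      exact ih hsub'

end TreeAut

namespace TreeAut

variable {F Q β γ : Type} [DecidableEq Q]

/-- Positions `i :: p` where `p` is a `q`-position of the `i`-th child. -/
def tailPos (st : β → Q) (q : Q) (ts : List (RTerm β)) : Set (List ℕ) :=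
  {ip | ∃ i p u, ip = i :: p ∧ ts[i]? = some u ∧ p ∈ stPos st u q}

theorem stPos_node (st : β → Q) (q : Q) (b : β) (ts : List (RTerm β)) :
    stPos st (RTerm.node b ts) q =
      (if st b = q then {([] : List ℕ)} else ∅) ∪ tailPos st q ts := by
  ext p
  constructor
  · rintro ⟨s, hs, hq⟩
    cases hs with
    | refl => left; simp only [RTerm.rootLabel] at hq; simp [hq]
    | step hget hsub =>
      right; exact ⟨_, _, _, rfl, hget, _, hsub, hq⟩
  · rintro (hp | ⟨i, p, u, rfl, hget, s, hsub, hq⟩)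
    · split at hp
      · rcases hp with rfl
        exact ⟨_, RTerm.SubAt.refl _, by assumption⟩
      · exact absurd hp (Set.notMem_empty _)
    · exact ⟨s, RTerm.SubAt.step hget hsub, hq⟩

theorem tailPos_nil (st : β → Q) (q : Q) : tailPos st q [] = ∅ := by
  ext p; simp [tailPos]

theorem tailPos_cons (st : β → Q) (q : Q) (u : RTerm β) (ts : List (RTerm β)) :
    tailPos st q (u :: ts) =
      (List.cons 0) '' stPos st u q ∪
      (fun ip : List ℕ => (ip.headI + 1) :: ip.tail) '' tailPos st q ts := by
  ext p
  constructor
  · rintro ⟨i, p, w, rfl, hget, hp⟩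
    cases i with
    | zero =>
      left
      simp only [List.getElem?_cons_zero] at hget
      cases hget
      exact ⟨p, hp, rfl⟩
    | succ k =>
      right
      exact ⟨k :: p, ⟨k, p, w, rfl, hget, hp⟩, rfl⟩
  · rintro (⟨p, hp, rfl⟩ | ⟨ip, ⟨i, p, w, rfl, hget, hp⟩, rfl⟩)
    · exact ⟨0, p, u, rfl, rfl, hp⟩
    · exact ⟨i + 1, p, w, rfl, hget, hp⟩

theorem tailPos_finite_card (st : β → Q) (q : Q) (ts : List (RTerm β))
    (h : ∀ u ∈ ts, (stPos st u q).Finite) :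
    (tailPos st q ts).Finite ∧
      (tailPos st q ts).ncard = (ts.map (fun u => (stPos st u q).ncard)).sum := by
  induction ts with
  | nil => simp [tailPos_nil]
  | cons u ts ih =>
    have hu : (stPos st u q).Finite := h u (List.mem_cons_self)
    obtain ⟨hfin, hcard⟩ := ih (fun w hw => h w (List.mem_cons_of_mem _ hw))
    have h1 : ((List.cons 0) '' stPos st u q).Finite := hu.image _
    have h2 : ((fun ip : List ℕ => (ip.headI + 1) :: ip.tail) '' tailPos st q ts).Finite :=
      hfin.image _
    have hdisj : Disjoint ((List.cons 0) '' stPos st u q)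
        ((fun ip : List ℕ => (ip.headI + 1) :: ip.tail) '' tailPos st q ts) := by
      rw [Set.disjoint_left]
      rintro p ⟨p1, _, rfl⟩ ⟨p2, _, h2'⟩
      simp at h2'
    have hinj1 : Set.InjOn (List.cons 0) (stPos st u q) :=
      fun a _ b _ hab => by injection hab
    have hinj2 : Set.InjOn (fun ip : List ℕ => (ip.headI + 1) :: ip.tail)
        (tailPos st q ts) := by
      rintro a ⟨i, p, w, rfl, _, _⟩ b ⟨j, p', w', rfl, _, _⟩ hab
      simp only [List.headI, List.tail] at hab
      injection hab with h1 h2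
      simp [Nat.succ_injective h1, h2]
    rw [tailPos_cons]
    constructor
    · exact h1.union h2
    · rw [Set.ncard_union_eq hdisj h1 h2, Set.ncard_image_of_injOn hinj1,
        Set.ncard_image_of_injOn hinj2, List.map_cons, List.sum_cons, hcard]

theorem stPos_finite (st : β → Q) (q : Q) (t : RTerm β) : (stPos st t q).Finite := by
  induction t using RTerm.ind' with
  | h b ts ih =>
    rw [stPos_node]
    exact Set.Finite.union (by split <;> simp) (tailPos_finite_card st q ts ih).1

theorem stCount_node (st : β → Q) (q : Q) (b : β) (ts : List (RTerm β)) :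
    stCount st (RTerm.node b ts) q =
      (if st b = q then 1 else 0) + (ts.map (fun u => stCount st u q)).sum := by
  have hfin := tailPos_finite_card st q ts (fun u _ => stPos_finite st q u)
  have hhead : ((if st b = q then {([] : List ℕ)} else ∅) : Set (List ℕ)).Finite := by
    split <;> simp
  have hdisj : Disjoint ((if st b = q then {([] : List ℕ)} else ∅) : Set (List ℕ))
      (tailPos st q ts) := by
    rw [Set.disjoint_left]
    intro p hp hp'
    rcases hp' with ⟨i, p', w, rfl, _, _⟩
    split at hp
    · simp at hp
    · exact hp
  unfold stCount
  rw [stPos_node, Set.ncard_union_eq hdisj hhead hfin.1, hfin.2]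
  congr 1
  split <;> simp

end TreeAut

namespace TreeAut

variable {F Q β γ : Type} [DecidableEq Q]

/-- Truncation of a counting function. -/
def truncF (m : ℕ) (c : Q → ℕ) : Q → Fin (m + 1) :=
  fun q => ⟨min (c q) m, Nat.lt_succ_of_le (Nat.min_le_right _ _)⟩

theorem msumF_truncF (m : ℕ) (c d : Q → ℕ) :
    msumF (truncF m c) (truncF m d) = truncF m (fun q => c q + d q) := by
  funext q
  apply Fin.ext
  simp only [msumF, truncF]
  omega

theorem unitMap_eq_truncF (m : ℕ) (q0 : Q) :
    unitMap m q0 = truncF m (fun q => if q = q0 then 1 else 0) := by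
  funext q
  apply Fin.ext
  simp only [unitMap, truncF]
  split <;> simp

theorem foldr_msumF_truncF (m : ℕ) (cs : List (Q → ℕ)) (c0 : Q → ℕ) :
    (cs.map (truncF m)).foldr msumF (truncF m c0) =
      truncF m (fun q => c0 q + (cs.map (fun c => c q)).sum) := by
  induction cs with
  | nil => simp
  | cons c cs ih =>
    rw [List.map_cons, List.foldr_cons, ih, msumF_truncF]
    apply congrArg (truncF m)
    funext q
    rw [List.map_cons, List.sum_cons]
    ring

theorem le_foldr_max (a : ℕ) (l : List ℕ) (h : a ∈ l) : a ≤ l.foldr max 0 := by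
  induction l with
  | nil => cases h
  | cons b l ih =>
    rcases List.mem_cons.1 h with rfl | h
    · exact le_max_left _ _
    · exact le_trans (ih h) (le_max_right _ _)

theorem list_sum_nonpos {L : List ℤ} (h : ∀ x ∈ L, x ≤ 0) : L.sum ≤ 0 := by
  induction L with
  | nil => simp
  | cons b L ih =>
    have := h b (List.mem_cons_self)
    have := ih (fun y hy => h y (List.mem_cons_of_mem _ hy))
    simp only [List.sum_cons]; omega

theorem sum_le_single {L : List ℤ} (h : ∀ x ∈ L, x ≤ 0) : ∀ x ∈ L, L.sum ≤ x := by
  induction L with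
  | nil => intro x hx; cases hx
  | cons b L ih =>
    intro x hx
    rcases List.mem_cons.1 hx with rfl | hx
    · have : L.sum ≤ 0 := list_sum_nonpos (fun y hy => h y (List.mem_cons_of_mem _ hy))
      simp only [List.sum_cons]; omega
    · have hb : b ≤ 0 := h b (List.mem_cons_self)
      have := ih (fun y hy => h y (List.mem_cons_of_mem _ hy)) x hx
      simp only [List.sum_cons]; omega

/-- The key truncation lemma for natural linear inequalities. -/
theorem trunc_lin_iff (l : List (ℤ × Q)) (a : ℤ) (m : ℕ) (cnt : Q → ℕ)
    (hs : sameSign (l.map Prod.fst) a) (ha : a.natAbs < m) :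
    (a ≤ (l.map (fun cq => cq.1 * ((min (cnt cq.2) m : ℕ) : ℤ))).sum) ↔
    (a ≤ (l.map (fun cq => cq.1 * ((cnt cq.2 : ℕ) : ℤ))).sum) := by
  by_cases hall : ∀ cq ∈ l, cq.1 = 0 ∨ cnt cq.2 ≤ m
  · have : (l.map (fun cq => cq.1 * ((min (cnt cq.2) m : ℕ) : ℤ))) =
        (l.map (fun cq => cq.1 * ((cnt cq.2 : ℕ) : ℤ))) := by
      apply List.map_congr_left
      intro cq hcq
      rcases hall cq hcq with h0 | hle
      · rw [h0]; simp
      · rw [min_eq_left hle]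
    rw [this]
  · push_neg at hall
    obtain ⟨cq, hmem, hc0, hgt⟩ := hall
    have hminm : min (cnt cq.2) m = m := min_eq_right (le_of_lt hgt)
    rcases hs with ⟨hpos, hapos⟩ | ⟨hneg, haneg⟩
    · -- positive case : both sides hold
      have hcpos : 1 ≤ cq.1 := by
        have := hpos cq.1 (List.mem_map_of_mem (f := Prod.fst) hmem)
        omega
      have ham : a < (m : ℤ) := by omega
      constructor <;> intro _
      all_goals {
        apply le_trans (le_of_lt ham)
        apply le_trans _ (List.single_le_sum ?_ _ (List.mem_map_of_mem hmem))
        · have h1 : (m : ℤ) ≤ ((min (cnt cq.2) m : ℕ) : ℤ) := by rw [hminm]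
          have h2 : (m : ℤ) ≤ ((cnt cq.2 : ℕ) : ℤ) := by
            exact_mod_cast le_of_lt hgt
          nlinarith
        · intro x hx
          rcases List.mem_map.1 hx with ⟨dq, hdq, rfl⟩
          have := hpos dq.1 (List.mem_map_of_mem (f := Prod.fst) hdq)
          positivity
      }
    · -- negative case : both sides fail
      have hcneg : cq.1 ≤ -1 := by
        have := hneg cq.1 (List.mem_map_of_mem (f := Prod.fst) hmem)
        omega
      have ham : -(m : ℤ) < a := by omega
      have key : ∀ f : ℤ × Q → ℤ, (∀ dq ∈ l, f dq ≤ 0) → f cq ≤ -(m : ℤ) →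
          ¬ (a ≤ (l.map f).sum) := by
        intro f hf hfcq hle
        have h1 : (l.map f).sum ≤ f cq := by
          apply sum_le_single _ _ (List.mem_map_of_mem (f := f) hmem)
          rintro x hx
          rcases List.mem_map.1 hx with ⟨dq, hdq, rfl⟩
          exact hf dq hdq
        omega
      constructor <;> intro hle <;> exfalso
      · refine key _ ?_ ?_ hle
        · intro dq hdq
          have := hneg dq.1 (List.mem_map_of_mem (f := Prod.fst) hdq)
          have h0 : (0:ℤ) ≤ ((min (cnt dq.2) m : ℕ) : ℤ) := Int.natCast_nonneg _
          nlinarith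
        · have h1 : ((min (cnt cq.2) m : ℕ) : ℤ) = (m : ℤ) := by rw [hminm]
          nlinarith
      · refine key _ ?_ ?_ hle
        · intro dq hdq
          have := hneg dq.1 (List.mem_map_of_mem (f := Prod.fst) hdq)
          have h0 : (0:ℤ) ≤ ((cnt dq.2 : ℕ) : ℤ) := Int.natCast_nonneg _
          nlinarith
        · have h2 : (m : ℤ) ≤ ((cnt cq.2 : ℕ) : ℤ) := by exact_mod_cast le_of_lt hgt
          nlinarith

end TreeAut

namespace TreeAut

variable {F Q β γ : Type}

theorem satGC_conjList (E : List (Pat F × Pat F)) (st : β → Q) (sy : β → F)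
    (r : RTerm β) (L : List (GC Q)) :
    satGC E st sy r (conjList L) ↔ ∀ c ∈ L, satGC E st sy r c := by
  induction L with
  | nil => simp [conjList, satGC]
  | cons c cs ih =>
    cases cs with
    | nil => simp [conjList]
    | cons d ds =>
      rw [show conjList (c :: d :: ds) = GC.and c (conjList (d :: ds)) from rfl]
      rw [show satGC E st sy r (GC.and c (conjList (d :: ds))) =
        (satGC E st sy r c ∧ satGC E st sy r (conjList (d :: ds))) from rfl, ih]
      simp

theorem cntAtoms_sameSign (c : GC Q) (h1 : c.IsConjAtoms) (h2 : c.AtomsAre GAtom.IsNatCnt) :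
    ∀ la ∈ c.cntAtoms, sameSign (la.1.map Prod.fst) la.2 := by
  induction c with
  | tt => simp [GC.cntAtoms]
  | ff => exact absurd h1 (by simp [GC.IsConjAtoms])
  | atom a =>
    cases a with
    | eq q q' => simp [GC.cntAtoms]
    | neq q q' => simp [GC.cntAtoms]
    | cnt l a =>
      intro la hla
      simp only [GC.cntAtoms, List.mem_singleton] at hla
      subst hla
      exact h2
    | cls l a => exact absurd h2 (by simp [GC.AtomsAre, GAtom.IsNatCnt])
  | and c d ihc ihd =>
    intro la hla
    rcases List.mem_append.1 hla with h | h
    · exact ihc h1.1 h2.1 la h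
    · exact ihd h1.2 h2.2 la h
  | or c d ihc ihd => exact absurd h1 (by simp [GC.IsConjAtoms])
  | not c ih => exact absurd h1 (by simp [GC.IsConjAtoms])

theorem cntAtoms_const_lt (c : GC Q) :
    ∀ la ∈ c.cntAtoms, la.2.natAbs < c.maxConst := by
  intro la hla
  have : la.2.natAbs ∈ (c.cntAtoms.map (fun la => la.2.natAbs)) :=
    List.mem_map_of_mem hla
  have := le_foldr_max _ _ this
  unfold GC.maxConst
  omega

/-- Satisfaction of a conjunction of `IsNatCnt` atoms, atom by atom. -/
theorem sat_conjAtoms (E : List (Pat F × Pat F)) (st : β → Q) (sy : β → F)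
    (r : RTerm β) (c : GC Q) (h1 : c.IsConjAtoms) (h2 : c.AtomsAre GAtom.IsNatCnt) :
    satGC E st sy r c ↔
      ((∀ qq ∈ c.eqAtoms, satAtom E st sy r (GAtom.eq qq.1 qq.2)) ∧
       (∀ qq ∈ c.neqAtoms, satAtom E st sy r (GAtom.neq qq.1 qq.2)) ∧
       (∀ la ∈ c.cntAtoms, satAtom E st sy r (GAtom.cnt la.1 la.2))) := by
  induction c with
  | tt => simp [satGC, GC.eqAtoms, GC.neqAtoms, GC.cntAtoms]
  | ff => exact absurd h1 (by simp [GC.IsConjAtoms])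
  | atom a =>
    cases a with
    | eq q q' => simp [satGC, GC.eqAtoms, GC.neqAtoms, GC.cntAtoms]
    | neq q q' => simp [satGC, GC.eqAtoms, GC.neqAtoms, GC.cntAtoms]
    | cnt l a => simp [satGC, GC.eqAtoms, GC.neqAtoms, GC.cntAtoms]
    | cls l a => exact absurd h2 (by simp [GC.AtomsAre, GAtom.IsNatCnt])
  | and c d ihc ihd =>
    rw [show satGC E st sy r (GC.and c d) = (satGC E st sy r c ∧ satGC E st sy r d)
      from rfl, ihc h1.1 h2.1, ihd h1.2 h2.2]
    simp only [GC.eqAtoms, GC.neqAtoms, GC.cntAtoms, List.mem_append]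
    constructor
    · rintro ⟨⟨e1, n1, c1⟩, ⟨e2, n2, c2⟩⟩
      refine ⟨?_, ?_, ?_⟩ <;> rintro x (h | h)
      exacts [e1 x h, e2 x h, n1 x h, n2 x h, c1 x h, c2 x h]
    · rintro ⟨he, hn, hc⟩
      exact ⟨⟨fun x h => he x (Or.inl h), fun x h => hn x (Or.inl h),
              fun x h => hc x (Or.inl h)⟩,
             ⟨fun x h => he x (Or.inr h), fun x h => hn x (Or.inr h),
              fun x h => hc x (Or.inr h)⟩⟩
  | or c d ihc ihd => exact absurd h1 (by simp [GC.IsConjAtoms])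
  | not c ih => exact absurd h1 (by simp [GC.IsConjAtoms])

theorem mem_mapM_list {α δ : Type} (f : α → List δ) :
    ∀ (l : List α) (x : List δ), x ∈ l.mapM f ↔ List.Forall₂ (fun a b => b ∈ f a) l x := by
  intro l
  induction l with
  | nil =>
    intro x
    simp only [List.mapM_nil]
    constructor
    · intro h
      simp only [pure, List.singleton, List.mem_singleton] at h
      subst h; exact List.Forall₂.nil
    · intro h; cases h; simp [pure, List.singleton]
  | cons a l ih =>
    intro x
    rw [List.mapM_cons]
    constructor
    · intro h
      simp only [bind, pure, List.singleton, List.mem_flatMap, List.mem_map, List.mem_singleton] at h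
      obtain ⟨b, hb, y, hy, rfl⟩ := h
      exact List.Forall₂.cons hb ((ih y).1 hy)
    · intro h
      cases h with
      | cons hb hy =>
        simp only [bind, pure, List.singleton, List.mem_flatMap, List.mem_map, List.mem_singleton]
        exact ⟨_, hb, _, (ih _).2 hy, rfl⟩

end TreeAut

namespace TreeAut

variable {F Q Q' β γ : Type}

/-- Pointwise relabeling of rules along a state map. -/
def pj (π : Q' → Q) (ρ : Rule F Q') : Rule F Q :=
  ⟨ρ.sym, ρ.args.map π, ρ.bcEq, ρ.bcNeq, π ρ.res⟩

theorem state_map_pj (π : Q' → Q) (r : Run F Q') :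
    Run.state (r.map (pj π)) = π (Run.state r) := by
  unfold Run.state
  rw [RTerm.rootLabel_map]
  rfl

theorem term_map_pj (π : Q' → Q) (r : Run F Q') :
    Run.term (r.map (pj π)) = Run.term r := by
  unfold Run.term
  rw [RTerm.map_map]
  rfl

theorem mem_notNVars_iff [Fintype Q] [DecidableEq Q] {m : ℕ} {ρ : Rule F Q}
    {ρ' : Rule F (Q × (Q → Fin (m + 1)))} :
    ρ' ∈ ρ.notNVars m ↔
      ρ'.sym = ρ.sym ∧ ρ'.args.map Prod.fst = ρ.args ∧ ρ'.bcEq = ρ.bcEq ∧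
      ρ'.bcNeq = ρ.bcNeq ∧
      ρ'.res = (ρ.res, (ρ'.args.map Prod.snd).foldr msumF (unitMap m ρ.res)) := by
  unfold Rule.notNVars
  rw [List.mem_map]
  constructor
  · rintro ⟨args', hargs, rfl⟩
    have key : ∀ (l : List Q) (x : List (Q × (Q → Fin (m + 1)))),
        List.Forall₂ (fun a b => b ∈ ((Finset.univ : Finset (Q → Fin (m + 1))).toList.map
          (fun M => (a, M)))) l x → x.map Prod.fst = l := by
      intro l x hf
      induction hf with
      | nil => rfl
      | cons hb _ ih =>
        rcases List.mem_map.1 hb with ⟨M, _, rfl⟩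
        simp [ih]
    exact ⟨rfl, key _ _ ((mem_mapM_list _ _ _).1 hargs), rfl, rfl, rfl⟩
  · rintro ⟨hsym, hargs, hbe, hbn, hres⟩
    refine ⟨ρ'.args, ?_, ?_⟩
    · rw [mem_mapM_list, ← hargs]
      generalize ρ'.args = l
      induction l with
      | nil => exact List.Forall₂.nil
      | cons x l ih =>
        refine List.Forall₂.cons ?_ ih
        rw [List.mem_map]
        exact ⟨x.2, Finset.mem_toList.2 (Finset.mem_univ _), rfl⟩
    · cases ρ'
      simp only at hsym hargs hbe hbn hres
      simp [hsym, hbe, hbn, hres]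

theorem isRun_proj [Fintype Q] [DecidableEq Q] {m : ℕ} {Δ : List (Rule F Q)}
    {E : List (Pat F × Pat F)} {r' : Run F (Q × (Q → Fin (m + 1)))}
    (h : IsRun (Δ.flatMap (Rule.notNVars m)) E r') :
    IsRun Δ E (r'.map (pj Prod.fst)) := by
  induction h with
  | @node ρ' rs' hρ hargs hrs hbe hbn ih =>
    rw [RTerm.map_node]
    rcases List.mem_flatMap.1 hρ with ⟨ρ, hρΔ, hmem⟩
    rcases mem_notNVars_iff.1 hmem with ⟨hsym, hargsf, hbe', hbn', hres⟩
    have hpj : pj Prod.fst ρ' = ρ := by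
      unfold pj
      rw [hsym, hargsf, hbe', hbn', hres]
    refine IsRun.node (hpj ▸ hρΔ) ?_ ?_ ?_ ?_
    · rw [show (pj Prod.fst ρ').args = ρ'.args.map Prod.fst from rfl, hargs,
        List.map_map, List.map_map]
      apply List.map_congr_left
      intro s _
      exact (state_map_pj Prod.fst s).symm
    · rintro r hr
      rcases List.mem_map.1 hr with ⟨s, hs, rfl⟩
      exact ih s hs
    · intro i j ri rj hij hgi hgj
      rw [List.getElem?_map] at hgi hgj
      rcases Option.map_eq_some_iff.1 hgi with ⟨ri0, hri0, rfl⟩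
      rcases Option.map_eq_some_iff.1 hgj with ⟨rj0, hrj0, rfl⟩
      rw [term_map_pj, term_map_pj]
      exact hbe i j ri0 rj0 hij hri0 hrj0
    · intro i j ri rj hij hgi hgj
      rw [List.getElem?_map] at hgi hgj
      rcases Option.map_eq_some_iff.1 hgi with ⟨ri0, hri0, rfl⟩
      rcases Option.map_eq_some_iff.1 hgj with ⟨rj0, hrj0, rfl⟩
      rw [term_map_pj, term_map_pj]
      exact hbn i j ri0 rj0 hij hri0 hrj0

/-- Annotation of a run with truncated occurrence counts. -/
def ann [DecidableEq Q] (m : ℕ) : Run F Q → Run F (Q × (Q → Fin (m + 1)))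
  | .node ρ rs =>
    RTerm.node
      ⟨ρ.sym, (rs.attach.map (fun u => ann m u.1)).map Run.state, ρ.bcEq, ρ.bcNeq,
        (ρ.res, (((rs.attach.map (fun u => ann m u.1)).map Run.state).map Prod.snd).foldr
          msumF (unitMap m ρ.res))⟩
      (rs.attach.map (fun u => ann m u.1))
decreasing_by
  all_goals
    simp only [RTerm.node.sizeOf_spec]
    have := List.sizeOf_lt_of_mem u.2
    omega

theorem ann_node [DecidableEq Q] (m : ℕ) (ρ : Rule F Q) (rs : List (Run F Q)) :
    ann m (RTerm.node ρ rs) =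
      RTerm.node
        ⟨ρ.sym, (rs.map (ann m)).map Run.state, ρ.bcEq, ρ.bcNeq,
          (ρ.res, (((rs.map (ann m)).map Run.state).map Prod.snd).foldr
            msumF (unitMap m ρ.res))⟩
        (rs.map (ann m)) := by
  rw [ann]
  simp [List.attach_map_subtype_val]

theorem ann_term [DecidableEq Q] (m : ℕ) (r : Run F Q) :
    Run.term (ann m r) = Run.term r := by
  induction r using RTerm.ind' with
  | h ρ rs ih =>
    show RTerm.map Rule.sym _ = RTerm.map Rule.sym _
    rw [ann_node, RTerm.map_node, RTerm.map_node]
    congr 1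
    rw [List.map_map]
    apply List.map_congr_left
    intro u hu
    exact ih u hu

theorem ann_state_fst [DecidableEq Q] (m : ℕ) (r : Run F Q) :
    (Run.state (ann m r)).1 = Run.state r := by
  cases r with
  | node ρ rs => rw [ann_node]; rfl

theorem isRun_ann [Fintype Q] [DecidableEq Q] {m : ℕ} {Δ : List (Rule F Q)}
    {E : List (Pat F × Pat F)} {r : Run F Q} (h : IsRun Δ E r) :
    IsRun (Δ.flatMap (Rule.notNVars m)) E (ann m r) := by
  induction h with
  | @node ρ rs hρ hargs hrs hbe hbn ih =>
    rw [ann_node]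
    refine IsRun.node ?_ rfl ?_ ?_ ?_
    · apply List.mem_flatMap.2
      refine ⟨ρ, hρ, mem_notNVars_iff.2 ⟨rfl, ?_, rfl, rfl, rfl⟩⟩
      show ((rs.map (ann m)).map Run.state).map Prod.fst = ρ.args
      rw [hargs, List.map_map, List.map_map]
      apply List.map_congr_left
      intro s _
      exact ann_state_fst m s
    · rintro r hr
      rcases List.mem_map.1 hr with ⟨s, hs, rfl⟩
      exact ih s hs
    · intro i j ri rj hij hgi hgj
      rw [List.getElem?_map] at hgi hgj
      rcases Option.map_eq_some_iff.1 hgi with ⟨ri0, hri0, rfl⟩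
      rcases Option.map_eq_some_iff.1 hgj with ⟨rj0, hrj0, rfl⟩
      rw [ann_term, ann_term]
      exact hbe i j ri0 rj0 hij hri0 hrj0
    · intro i j ri rj hij hgi hgj
      rw [List.getElem?_map] at hgi hgj
      rcases Option.map_eq_some_iff.1 hgi with ⟨ri0, hri0, rfl⟩
      rcases Option.map_eq_some_iff.1 hgj with ⟨rj0, hrj0, rfl⟩
      rw [ann_term, ann_term]
      exact hbn i j ri0 rj0 hij hri0 hrj0

theorem proj_ann [DecidableEq Q] {m : ℕ} {Δ : List (Rule F Q)}
    {E : List (Pat F × Pat F)} {r : Run F Q} (h : IsRun Δ E r) :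
    (ann m r).map (pj Prod.fst) = r := by
  induction h with
  | @node ρ rs hρ hargs hrs hbe hbn ih =>
    rw [ann_node, RTerm.map_node]
    congr 1
    · unfold pj
      cases ρ with
      | mk sym args be bn res =>
        simp only at hargs ⊢
        simp only [List.map_map]
        congr 1
        rw [hargs]
        apply List.map_congr_left
        intro s _
        exact ann_state_fst m s
    · rw [List.map_map]
      have : rs.map (RTerm.map (pj Prod.fst) ∘ ann m) = rs.map id := by
        apply List.map_congr_left
        intro u hu
        exact ih u hu
      rw [this, List.map_id]

theorem state_snd [Fintype Q] [DecidableEq Q] {m : ℕ} {Δ : List (Rule F Q)}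
    {E : List (Pat F × Pat F)} {r' : Run F (Q × (Q → Fin (m + 1)))}
    (h : IsRun (Δ.flatMap (Rule.notNVars m)) E r') :
    (Run.state r').2 =
      truncF m (fun q => stCount (fun b => (Rule.res b).1) r' q) := by
  induction h with
  | @node ρ' rs' hρ hargs hrs hbe hbn ih =>
    rcases List.mem_flatMap.1 hρ with ⟨ρ, _, hmem⟩
    rcases mem_notNVars_iff.1 hmem with ⟨hsym, hargsf, _, _, hres⟩
    show ρ'.res.2 = _
    have hsnd : ρ'.res.2 = (ρ'.args.map Prod.snd).foldr msumF (unitMap m ρ.res) := by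
      rw [hres]
    rw [hsnd, hargs, List.map_map]
    have hcs : rs'.map (Prod.snd ∘ Run.state) =
        (rs'.map (fun s => fun q => stCount (fun b => (Rule.res b).1) s q)).map
          (truncF m) := by
      rw [List.map_map]
      apply List.map_congr_left
      intro s hs
      exact ih s hs
    rw [hcs, unitMap_eq_truncF, foldr_msumF_truncF]
    apply congrArg (truncF m)
    funext q
    rw [stCount_node, List.map_map]
    have hst : ρ'.res.1 = ρ.res := by rw [hres]
    simp only [hst]
    congr 1
    simp [eq_comm]

end TreeAut

namespace TreeAut

variable {F Q Q' β γ : Type}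

theorem stPos_map (g : β → γ) (st : γ → Q) (t : RTerm β) (q : Q) :
    stPos st (t.map g) q = stPos (st ∘ g) t q := by
  ext p
  constructor
  · rintro ⟨s, hs, hq⟩
    rcases RTerm.subAt_map_inv hs with ⟨s0, hs0, rfl⟩
    exact ⟨s0, hs0, by rw [RTerm.rootLabel_map] at hq; exact hq⟩
  · rintro ⟨s0, hs0, hq⟩
    exact ⟨s0.map g, hs0.map, by rw [RTerm.rootLabel_map]; exact hq⟩

theorem map_sym_pj (π : Q' → Q) (s : Run F Q') :
    (s.map (pj π)).map Rule.sym = s.map Rule.sym := by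
  rw [RTerm.map_map]; rfl

theorem satAtom_eq_fst {m : ℕ} (E : List (Pat F × Pat F))
    (r' : Run F (Q × (Q → Fin (m + 1)))) (q q' : Q) :
    satAtom E Rule.res Rule.sym (r'.map (pj Prod.fst)) (GAtom.eq q q') ↔
      ∀ (M1 M2 : Q → Fin (m + 1)),
        satAtom E Rule.res Rule.sym r' (GAtom.eq (q, M1) (q', M2)) := by
  constructor
  · intro H M1 M2 p p' s s' hne hs hs' hsa hsb
    have h1 : Rule.res ((s.map (pj Prod.fst)).rootLabel) = q := by
      rw [RTerm.rootLabel_map]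
      show (Rule.res s.rootLabel).1 = q
      rw [hsa]
    have h2 : Rule.res ((s'.map (pj Prod.fst)).rootLabel) = q' := by
      rw [RTerm.rootLabel_map]
      show (Rule.res s'.rootLabel).1 = q'
      rw [hsb]
    have := H p p' (s.map (pj Prod.fst)) (s'.map (pj Prod.fst)) hne hs.map hs'.map h1 h2
    rwa [map_sym_pj, map_sym_pj] at this
  · intro H p p' s1 s2 hne h1 h2 hq1 hq2
    rcases RTerm.subAt_map_inv h1 with ⟨s, hs, rfl⟩
    rcases RTerm.subAt_map_inv h2 with ⟨s', hs', rfl⟩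
    rw [RTerm.rootLabel_map] at hq1 hq2
    have e1 : Rule.res s.rootLabel = (q, (Rule.res s.rootLabel).2) :=
      Prod.ext hq1 rfl
    have e2 : Rule.res s'.rootLabel = (q', (Rule.res s'.rootLabel).2) :=
      Prod.ext hq2 rfl
    have := H (Rule.res s.rootLabel).2 (Rule.res s'.rootLabel).2
      p p' s s' hne hs hs' e1 e2
    rwa [map_sym_pj, map_sym_pj]
  
theorem satAtom_neq_fst {m : ℕ} (E : List (Pat F × Pat F))
    (r' : Run F (Q × (Q → Fin (m + 1)))) (q q' : Q) :
    satAtom E Rule.res Rule.sym (r'.map (pj Prod.fst)) (GAtom.neq q q') ↔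
      ∀ (M1 M2 : Q → Fin (m + 1)),
        satAtom E Rule.res Rule.sym r' (GAtom.neq (q, M1) (q', M2)) := by
  constructor
  · intro H M1 M2 p p' s s' hne hs hs' hsa hsb
    have h1 : Rule.res ((s.map (pj Prod.fst)).rootLabel) = q := by
      rw [RTerm.rootLabel_map]
      show (Rule.res s.rootLabel).1 = q
      rw [hsa]
    have h2 : Rule.res ((s'.map (pj Prod.fst)).rootLabel) = q' := by
      rw [RTerm.rootLabel_map]
      show (Rule.res s'.rootLabel).1 = q'
      rw [hsb]
    have := H p p' (s.map (pj Prod.fst)) (s'.map (pj Prod.fst)) hne hs.map hs'.map h1 h2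
    rwa [map_sym_pj, map_sym_pj] at this
  · intro H p p' s1 s2 hne h1 h2 hq1 hq2
    rcases RTerm.subAt_map_inv h1 with ⟨s, hs, rfl⟩
    rcases RTerm.subAt_map_inv h2 with ⟨s', hs', rfl⟩
    rw [RTerm.rootLabel_map] at hq1 hq2
    have e1 : Rule.res s.rootLabel = (q, (Rule.res s.rootLabel).2) :=
      Prod.ext hq1 rfl
    have e2 : Rule.res s'.rootLabel = (q', (Rule.res s'.rootLabel).2) :=
      Prod.ext hq2 rfl
    have := H (Rule.res s.rootLabel).2 (Rule.res s'.rootLabel).2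
      p p' s s' hne hs hs' e1 e2
    rwa [map_sym_pj, map_sym_pj]

theorem mem_notN_final [Fintype Q] [DecidableEq Q] (A : TABG F Q)
    (x : Q × (Q → Fin (A.gc.maxConst + 1))) :
    x ∈ (A.notN).final ↔
      x.1 ∈ A.final ∧ ∀ la ∈ A.gc.cntAtoms, la.2 ≤ lvalF x.2 la.1 := by
  show x ∈ List.filter _ _ ↔ _
  rw [List.mem_filter]
  constructor
  · rintro ⟨hmem, hdec⟩
    rcases List.mem_flatMap.1 hmem with ⟨q, hq, hx⟩
    rcases List.mem_map.1 hx with ⟨M, _, rfl⟩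
    exact ⟨hq, by simpa using hdec⟩
  · rintro ⟨hfin, hcnt⟩
    refine ⟨List.mem_flatMap.2 ⟨x.1, hfin, List.mem_map.2
      ⟨x.2, Finset.mem_toList.2 (Finset.mem_univ _), rfl⟩⟩, by simpa using hcnt⟩

theorem sat_notN_gc [Fintype Q] [DecidableEq Q] (A : TABG F Q)
    (r' : Run F (Q × (Q → Fin (A.gc.maxConst + 1)))) :
    satGC A.eqs Rule.res Rule.sym r' (A.notN).gc ↔
      ((∀ qq ∈ A.gc.eqAtoms, satAtom A.eqs Rule.res Rule.sym
          (r'.map (pj Prod.fst)) (GAtom.eq qq.1 qq.2)) ∧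
       (∀ qq ∈ A.gc.neqAtoms, satAtom A.eqs Rule.res Rule.sym
          (r'.map (pj Prod.fst)) (GAtom.neq qq.1 qq.2))) := by
  show (satGC A.eqs Rule.res Rule.sym r' (conjList _) ∧
        satGC A.eqs Rule.res Rule.sym r' (conjList _)) ↔ _
  rw [satGC_conjList, satGC_conjList]
  constructor
  · rintro ⟨he, hn⟩
    constructor
    · intro qq hqq
      rw [satAtom_eq_fst]
      intro M1 M2
      exact he _ (List.mem_flatMap.2 ⟨qq, hqq, List.mem_flatMap.2
        ⟨M1, Finset.mem_toList.2 (Finset.mem_univ _), List.mem_map.2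
          ⟨M2, Finset.mem_toList.2 (Finset.mem_univ _), rfl⟩⟩⟩)
    · intro qq hqq
      rw [satAtom_neq_fst]
      intro M1 M2
      exact hn _ (List.mem_flatMap.2 ⟨qq, hqq, List.mem_flatMap.2
        ⟨M1, Finset.mem_toList.2 (Finset.mem_univ _), List.mem_map.2
          ⟨M2, Finset.mem_toList.2 (Finset.mem_univ _), rfl⟩⟩⟩)
  · rintro ⟨he, hn⟩
    constructor
    · intro c hc
      rcases List.mem_flatMap.1 hc with ⟨qq, hqq, hc⟩
      rcases List.mem_flatMap.1 hc with ⟨M1, _, hc⟩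
      rcases List.mem_map.1 hc with ⟨M2, _, rfl⟩
      exact (satAtom_eq_fst A.eqs r' qq.1 qq.2).1 (he qq hqq) M1 M2
    · intro c hc
      rcases List.mem_flatMap.1 hc with ⟨qq, hqq, hc⟩
      rcases List.mem_flatMap.1 hc with ⟨M1, _, hc⟩
      rcases List.mem_map.1 hc with ⟨M2, _, rfl⟩
      exact (satAtom_neq_fst A.eqs r' qq.1 qq.2).1 (hn qq hqq) M1 M2

end TreeAut


namespace TreeAut

/-- For a positive conjunctive TABG `A` whose global
constraint is a conjunction of atoms `q ≈ q'`, `q ≉ q'` and natural linear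
inequalities over the `|q|` only, the automaton `A_¬ℕ` (whose states count the
occurrences of the states of `A` up to `max_A`) has the same language:
`L(A_¬ℕ) = L(A)`. -/
theorem notN_preserves_language {F Q : Type} [Fintype Q] [DecidableEq Q]
    (A : TABG F Q) (hwf : A.WF) (hstQ : A.stQ = Finset.univ)
    (hconj : A.gc.IsConjAtoms) (hatoms : A.gc.AtomsAre GAtom.IsNatCnt) :
    (A.notN).Lang = A.Lang := by
  apply Set.eq_of_subset_of_subset
  · rintro t ⟨r', ⟨hrun, hsat, hfin⟩, rfl⟩
    have hrun' : IsRun (A.rules.flatMap (Rule.notNVars A.gc.maxConst)) A.eqs r' := hrun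
    have hfin' := (mem_notN_final A _).1 hfin
    refine ⟨r'.map (pj Prod.fst), ⟨isRun_proj hrun', ?_, ?_⟩, term_map_pj Prod.fst r'⟩
    · rw [sat_conjAtoms A.eqs Rule.res Rule.sym _ A.gc hconj hatoms]
      have hgc := (sat_notN_gc A r').1 hsat
      refine ⟨hgc.1, hgc.2, ?_⟩
      intro la hla
      have hcnt := hfin'.2 la hla
      rw [state_snd hrun'] at hcnt
      have hlval : lvalF (truncF A.gc.maxConst
            (fun q => stCount (fun b => (Rule.res b).1) r' q)) la.1 =
          (la.1.map (fun cq => cq.1 *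
            ((min (stCount (fun b => (Rule.res b).1) r' cq.2) A.gc.maxConst : ℕ) : ℤ))).sum :=
        rfl
      rw [hlval] at hcnt
      have hres := (trunc_lin_iff la.1 la.2 A.gc.maxConst _
        (cntAtoms_sameSign A.gc hconj hatoms la hla)
        (cntAtoms_const_lt A.gc la hla)).1 hcnt
      show la.2 ≤ (la.1.map (fun cq => cq.1 *
        ((stCount Rule.res (r'.map (pj Prod.fst)) cq.2 : ℕ) : ℤ))).sum
      have hstc : ∀ q, stCount Rule.res (r'.map (pj Prod.fst)) q =
          stCount (fun b => (Rule.res b).1) r' q := by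
        intro q
        unfold stCount
        rw [stPos_map]
        rfl
      simpa [hstc] using hres
    · rw [state_map_pj]
      exact hfin'.1
  · rintro t ⟨r, ⟨hrun, hsat, hfin⟩, rfl⟩
    have hsatA := (sat_conjAtoms A.eqs Rule.res Rule.sym r A.gc hconj hatoms).1 hsat
    refine ⟨ann A.gc.maxConst r, ⟨isRun_ann hrun, ?_, ?_⟩, ann_term _ r⟩
    · apply (sat_notN_gc A (ann A.gc.maxConst r)).2
      rw [proj_ann hrun]
      exact ⟨hsatA.1, hsatA.2.1⟩
    · apply (mem_notN_final A _).2
      constructor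
      · rw [ann_state_fst]
        exact hfin
      · intro la hla
        rw [state_snd (isRun_ann hrun)]
        have hA := hsatA.2.2 la hla
        have hstc : ∀ q, stCount (fun b => (Rule.res b).1) (ann A.gc.maxConst r) q =
            stCount Rule.res r q := by
          intro q
          unfold stCount
          conv_rhs => rw [← proj_ann (m := A.gc.maxConst) hrun]
          rw [stPos_map]
          rfl
        have hres := (trunc_lin_iff la.1 la.2 A.gc.maxConst
          (fun q => stCount (fun b => (Rule.res b).1) (ann A.gc.maxConst r) q)
          (cntAtoms_sameSign A.gc hconj hatoms la hla)
          (cntAtoms_const_lt A.gc la hla)).2 (by simpa [hstc, satAtom] using hA)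
        exact hres

end TreeAut
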